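/- Let $K$ be a nonempty compact nowhere dense subset of $\mathbb{R}$ with $\min K = 0$ and $\max K = 1$, and let $\mathcal{I}(K)$ be the linearly ordered set of connected components of $[0,1] \setminus K$ (ordered by their position in $\mathbb{R}$). Then the set of cuts $\mathcal{C}(\mathcal{I}(K))$ is order-isomorphic to $K$. -/
import Mathlib


/-- A cut of a set with a relation `r`: a pair `(A, B)` of disjoint sets with union
everything such that `r a b` holds for all `a ∈ A`, `b ∈ B`. -/
structure Cut (L : Type*) (r : L → L → Prop) where
  A : Set L
  B : Set L
  disj : Disjoint A B
  union : A ∪ B = Set.univ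
  sep : ∀ a ∈ A, ∀ b ∈ B, r a b

/-- Cuts are ordered by inclusion of first coordinates. -/
instance {L : Type*} {r : L → L → Prop} : LE (Cut L r) := ⟨fun c d => c.A ⊆ d.A⟩

/-- The linearly ordered set of connected components of `[0,1] \ K`. -/
def CompType (K : Set ℝ) : Type :=
  {C : Set ℝ // ∃ x ∈ Set.Icc (0:ℝ) 1 \ K, C = connectedComponentIn (Set.Icc (0:ℝ) 1 \ K) x}

/-- The pointwise order relation on components: every point of `C` is `≤` every point
of `D`. -/
def compLE (K : Set ℝ) (C D : CompType K) : Prop := ∀ a ∈ C.1, ∀ b ∈ D.1, a ≤ b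

namespace CutsAux

lemma Cut.ext' {L : Type*} {r : L → L → Prop} {c d : Cut L r}
    (hA : c.A = d.A) (hB : c.B = d.B) : c = d := by
  cases c; cases d; simp_all

variable {K : Set ℝ}

lemma comp_subset (C : CompType K) : C.1 ⊆ Set.Icc (0:ℝ) 1 \ K := by
  obtain ⟨x, hx, hC⟩ := C.2
  rw [hC]; exact connectedComponentIn_subset _ _

lemma comp_nonempty (C : CompType K) : C.1.Nonempty := by
  obtain ⟨x, hx, hC⟩ := C.2
  exact ⟨x, hC ▸ mem_connectedComponentIn hx⟩

lemma comp_ordConnected (C : CompType K) : C.1.OrdConnected := by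
  obtain ⟨x, hx, hC⟩ := C.2
  rw [hC]; exact isPreconnected_connectedComponentIn.ordConnected

lemma comp_not_mem (C : CompType K) {a : ℝ} (ha : a ∈ C.1) : a ∉ K :=
  (comp_subset C ha).2

lemma comp_eq_of_mem {C D : CompType K} {a : ℝ} (haC : a ∈ C.1) (haD : a ∈ D.1) : C = D := by
  obtain ⟨x, hx, hC⟩ := C.2
  obtain ⟨y, hy, hD⟩ := D.2
  apply Subtype.ext
  rw [hC, hD]
  rw [hC] at haC; rw [hD] at haD
  exact (connectedComponentIn_eq haC).trans (connectedComponentIn_eq haD).symm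

lemma U_open (hK : IsCompact K) (h0 : (0:ℝ) ∈ K) (h1 : (1:ℝ) ∈ K) :
    IsOpen (Set.Icc (0:ℝ) 1 \ K) := by
  have : Set.Icc (0:ℝ) 1 \ K = Set.Ioo (0:ℝ) 1 \ K := by
    ext x
    constructor
    · rintro ⟨⟨hx0, hx1⟩, hxK⟩
      exact ⟨⟨lt_of_le_of_ne hx0 (fun h => hxK (h ▸ h0)),
        lt_of_le_of_ne hx1 (fun h => hxK (h ▸ h1))⟩, hxK⟩
    · rintro ⟨⟨hx0, hx1⟩, hxK⟩
      exact ⟨⟨hx0.le, hx1.le⟩, hxK⟩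
  rw [this]
  exact isOpen_Ioo.sdiff hK.isClosed

lemma comp_bddAbove (C : CompType K) : BddAbove C.1 :=
  ⟨1, fun x hx => ((comp_subset C) hx).1.2⟩

lemma comp_sSup_mem (hK : IsCompact K) (h0 : (0:ℝ) ∈ K) (h1 : (1:ℝ) ∈ K)
    (C : CompType K) : sSup C.1 ∈ K := by
  set s := sSup C.1 with hs
  obtain ⟨x0, hx0⟩ := comp_nonempty C
  have hbdd := comp_bddAbove C
  have hs0 : (0:ℝ) ≤ s := le_trans ((comp_subset C) hx0).1.1 (le_csSup hbdd hx0)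
  have hs1 : s ≤ 1 := csSup_le ⟨x0, hx0⟩ (fun x hx => ((comp_subset C) hx).1.2)
  by_contra hsK
  -- then s ∈ U, and since U is open, s belongs to C (which is open), contradiction
  have hsU : s ∈ Set.Icc (0:ℝ) 1 \ K := ⟨⟨hs0, hs1⟩, hsK⟩
  have hUopen := U_open hK h0 h1
  obtain ⟨ε, hε, hball⟩ := Metric.isOpen_iff.1 hUopen s hsU
  -- get a point of C close to s
  obtain ⟨t, htC, hts⟩ := exists_lt_of_lt_csSup ⟨x0, hx0⟩ (show s - ε/2 < s by linarith)
  have hts' : t ≤ s := le_csSup hbdd htC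
  have hIcc : Set.Icc t s ⊆ Metric.ball s ε := by
    intro y ⟨hy1, hy2⟩
    rw [Metric.mem_ball, Real.dist_eq, abs_lt]
    constructor <;> linarith
  have hIccU : Set.Icc t s ⊆ Set.Icc (0:ℝ) 1 \ K := fun y hy => hball (hIcc hy)
  obtain ⟨x, hx, hCeq⟩ := C.2
  have hCt : connectedComponentIn (Set.Icc (0:ℝ) 1 \ K) t = C.1 := by
    rw [hCeq]; rw [hCeq] at htC; exact (connectedComponentIn_eq htC).symm
  have hsubC : Set.Icc t s ⊆ C.1 := by
    rw [← hCt]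
    exact isPreconnected_Icc.subset_connectedComponentIn
      (Set.left_mem_Icc.2 hts') hIccU
  have hsC : s ∈ C.1 := hsubC (Set.right_mem_Icc.2 hts')
  -- C is open, so s cannot be its sup
  have hCopen : IsOpen C.1 := by rw [hCeq]; exact hUopen.connectedComponentIn
  obtain ⟨δ, hδ, hδball⟩ := Metric.isOpen_iff.1 hCopen s hsC
  have : s + δ/2 ∈ C.1 := by
    apply hδball
    rw [Metric.mem_ball, Real.dist_eq]
    rw [abs_lt]; constructor <;> linarith
  have := le_csSup hbdd this
  linarith

/-- There is a component between any two points of `K`. -/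
lemma exists_gap (hK : IsCompact K) (hnd : IsNowhereDense K) (hsub : K ⊆ Set.Icc 0 1)
    {a b : ℝ} (ha : a ∈ K) (hb : b ∈ K) (hab : a < b) :
    ∃ x, x ∈ Set.Icc (0:ℝ) 1 \ K ∧ a < x ∧ x < b := by
  have hint : interior K = ∅ := by
    have := hnd
    rw [IsNowhereDense, hK.isClosed.closure_eq] at this
    exact this
  have : ¬ (Set.Ioo a b ⊆ K) := by
    intro h
    have := interior_mono h
    rw [interior_Ioo, hint, Set.subset_empty_iff, Set.Ioo_eq_empty_iff] at this
    exact this hab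
  obtain ⟨x, hx, hxK⟩ := Set.not_subset.1 this
  exact ⟨x, ⟨⟨(hsub ha).1.trans hx.1.le, hx.2.le.trans (hsub hb).2⟩, hxK⟩, hx.1, hx.2⟩

end CutsAux

open CutsAux in
/-- If `K` is a nonempty compact nowhere dense subset of `ℝ` with `min K = 0` and
`max K = 1`, then the set of cuts of the ordered set of components of `[0,1] \ K` is
order-isomorphic to `K`. -/
theorem cuts_of_components_orderIso (K : Set ℝ) (hne : K.Nonempty) (hK : IsCompact K)
    (hnd : IsNowhereDense K) (hsub : K ⊆ Set.Icc 0 1) (h0 : (0:ℝ) ∈ K) (h1 : (1:ℝ) ∈ K) :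
    Nonempty (Cut (CompType K) (compLE K) ≃o K) := by
  -- separation property of the candidate cut at `k`
  have hsep : ∀ k : K, ∀ C ∈ {C : CompType K | ∀ a ∈ C.1, a ≤ (k:ℝ)},
      ∀ D ∈ {C : CompType K | ∀ a ∈ C.1, a ≤ (k:ℝ)}ᶜ, compLE K C D := by
    rintro k C hC D hD a haC b hbD
    simp only [Set.mem_compl_iff, Set.mem_setOf_eq] at hD
    push_neg at hD
    obtain ⟨b₀, hb₀D, hb₀⟩ := hD
    by_contra hab
    push_neg at hab
    -- then b < a ≤ k < b₀, so k ∈ D, contradiction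
    have hak : a ≤ k := hC a haC
    have hkD : (k:ℝ) ∈ D.1 :=
      (comp_ordConnected D).out hbD hb₀D ⟨by linarith, hb₀.le⟩
    exact comp_not_mem D hkD k.2
  -- define the map K → cuts
  set φ : K → Cut (CompType K) (compLE K) := fun k =>
    ⟨{C : CompType K | ∀ a ∈ C.1, a ≤ (k:ℝ)}, {C : CompType K | ∀ a ∈ C.1, a ≤ (k:ℝ)}ᶜ,
      disjoint_compl_right, Set.union_compl_self _, hsep k⟩ with hφ
  -- order reflecting
  have hrel : ∀ k k' : K, φ k ≤ φ k' ↔ k ≤ k' := by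
    intro k k'
    constructor
    · intro h
      by_contra hlt
      push_neg at hlt
      obtain ⟨x, hxU, hk'x, hxk⟩ := exists_gap hK hnd hsub k'.2 k.2 hlt
      set C : CompType K := ⟨connectedComponentIn (Set.Icc (0:ℝ) 1 \ K) x, ⟨x, hxU, rfl⟩⟩
      have hxC : x ∈ C.1 := mem_connectedComponentIn hxU
      have hCk : C ∈ (φ k).A := by
        intro a haC
        by_contra hka
        push_neg at hka
        have : (k:ℝ) ∈ C.1 :=
          (comp_ordConnected C).out hxC haC ⟨hxk.le, hka.le⟩
        exact comp_not_mem C this k.2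
      have := h hCk x hxC
      linarith
    · intro h C hC a haC
      exact (hC a haC).trans h
  -- injectivity
  have hinj : Function.Injective φ := by
    intro k k' h
    have h1 : φ k ≤ φ k' := le_of_eq (congrArg Cut.A h)
    have h2 : φ k' ≤ φ k := le_of_eq (congrArg Cut.A h.symm)
    exact le_antisymm ((hrel k k').1 h1) ((hrel k' k).1 h2)
  -- surjectivity
  have hsurj : Function.Surjective φ := by
    intro c
    set T : Set ℝ := insert (0:ℝ) (⋃ C ∈ c.A, (C : CompType K).1) with hT
    have hTne : T.Nonempty := ⟨0, Set.mem_insert _ _⟩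
    have hTsub : ∀ t ∈ T, t ≤ 1 := by
      rintro t (rfl | ht)
      · norm_num
      · simp only [Set.mem_iUnion] at ht
        obtain ⟨C, _, htC⟩ := ht
        exact ((comp_subset C) htC).1.2
    have hTbdd : BddAbove T := ⟨1, hTsub⟩
    set k : ℝ := sSup T with hk
    have hk0 : (0:ℝ) ≤ k := le_csSup hTbdd (Set.mem_insert _ _)
    -- k ∈ K
    have hkK : k ∈ K := by
      rw [← hK.isClosed.closure_eq]
      rw [Metric.mem_closure_iff]
      intro ε hε
      obtain ⟨t, htT, hlt⟩ := exists_lt_of_lt_csSup hTne (show k - ε < k by linarith)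
      rcases htT with rfl | htT
      · exact ⟨0, h0, by rw [Real.dist_eq]; rw [abs_lt]; constructor <;> linarith⟩
      · simp only [Set.mem_iUnion] at htT
        obtain ⟨C, hCA, htC⟩ := htT
        refine ⟨sSup C.1, comp_sSup_mem hK h0 h1 C, ?_⟩
        have h1' : t ≤ sSup C.1 := le_csSup (comp_bddAbove C) htC
        have h2' : sSup C.1 ≤ k :=
          csSup_le_csSup hTbdd ⟨t, htC⟩
            (fun y hy => Set.mem_insert_of_mem _ (Set.mem_biUnion hCA hy))
        rw [Real.dist_eq, abs_lt]; constructor <;> linarith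
    refine ⟨⟨k, hkK⟩, ?_⟩
    -- show φ k = c, by showing the A-parts agree
    have hBc : c.B = c.Aᶜ := by
      ext C
      constructor
      · intro hB hA
        exact Set.disjoint_left.1 c.disj hA hB
      · intro hC
        rcases Set.eq_univ_iff_forall.1 c.union C with h | h
        · exact absurd h hC
        · exact h
    have hA : (φ ⟨k, hkK⟩).A = c.A := by
      apply Set.Subset.antisymm
      · intro C hC
        by_contra hCA
        have hCB : C ∈ c.B := by
          have := Set.eq_univ_iff_forall.1 c.union C
          rcases this with h | h
          · exact absurd h hCA
          · exact h
        obtain ⟨b, hbC⟩ := comp_nonempty C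
        have hbk : b ≤ k := hC b hbC
        have hkb : k ≤ b := by
          apply csSup_le hTne
          rintro t (rfl | htT)
          · exact ((comp_subset C) hbC).1.1
          · simp only [Set.mem_iUnion] at htT
            obtain ⟨C', hC'A, htC'⟩ := htT
            exact c.sep C' hC'A C hCB t htC' b hbC
        have : b = k := le_antisymm hbk hkb
        exact comp_not_mem C hbC (this ▸ hkK)
      · intro C hC a haC
        exact le_csSup hTbdd (Set.mem_insert_of_mem _ (Set.mem_biUnion hC haC))
    apply Cut.ext' hA
    have hφB : (φ ⟨k, hkK⟩).B = (φ ⟨k, hkK⟩).Aᶜ := rfl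
    rw [hφB, hA, hBc]
  exact ⟨(OrderIso.symm ⟨Equiv.ofBijective φ ⟨hinj, hsurj⟩, hrel _ _⟩ :
    Cut (CompType K) (compLE K) ≃o K)⟩
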